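/- Let G = Π_{k=1}^C G_k be a class of functions from X into [−M, M]^C with M ≥ 1 and C ≥ 3. For g = (g_k) ∈ G define f_g(x, y) = (1/2)(g_y(x) − max_{l≠y} g_l(x)). Then for every ε > 0, every m ≥ 1, every sample z_m = ((x_i, y_i))_{1≤i≤m} ∈ (X × {1,…,C})^m, and every p ∈ ℕ* ∪ {∞}, the proper covering number of F_G = {f_g : g ∈ G} satisfies N^(p)(ε, F_G, d_{p,z_m}) ≤ Π_{k=1}^C N^(p)(ε/C^{1/p}, G_k, d_{p,x_m}), where x_m = (x_i) and for p = ∞ the factor C^{1/p} is interpreted as 1. -/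

import Mathlib

/-- Empirical `L_p` pseudo-distance with respect to the sample `t`. -/
noncomputable def empDist {T : Type*} (p n : ℕ) (t : Fin n → T) (f g : T → ℝ) : ℝ :=
  ((1 / (n : ℝ)) * ∑ i, |f (t i) - g (t i)| ^ p) ^ ((1 : ℝ) / (p : ℝ))

/-- Empirical `L_∞` pseudo-distance with respect to the sample `t`. -/
noncomputable def empDistInf {T : Type*} (n : ℕ) (t : Fin n → T) (f g : T → ℝ) : ℝ :=
  ⨆ i : Fin n, |f (t i) - g (t i)|

/-- Minimal cardinality of a proper ε-net of `F` for the pseudo-distance `d`. -/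
noncomputable def properCoveringNumber {α : Type*} (ε : ℝ) (F : Set α) (d : α → α → ℝ) : ℕ∞ :=
  sInf {n : ℕ∞ | ∃ N : Finset α, ↑N ⊆ F ∧ (∀ f ∈ F, ∃ c ∈ N, d f c < ε) ∧ (N.card : ℕ∞) = n}

/-- The margin function `f_g (x, y) = (g_y(x) - max_{l ≠ y} g_l(x)) / 2`. -/
noncomputable def marginFun {X : Type*} {C : ℕ} (hC : 2 ≤ C) (g : Fin C → X → ℝ) :
    X × Fin C → ℝ := fun z =>
  (1 / 2) * (g z.2 z.1 -
    (Finset.univ.erase z.2).sup' (by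
      rw [← Finset.card_pos, Finset.card_erase_of_mem (Finset.mem_univ _),
        Finset.card_univ, Fintype.card_fin]
      omega) (fun l => g l z.1))

lemma abs_sup'_sub_sup'_le {ι : Type*} (A : Finset ι) (h : A.Nonempty) (f f' : ι → ℝ) :
    |A.sup' h f - A.sup' h f'| ≤ A.sup' h fun i => |f i - f' i| := by
  rw [abs_sub_le_iff]
  constructor
  · rw [sub_le_iff_le_add]
    apply Finset.sup'_le
    intro i hi
    calc f i ≤ |f i - f' i| + f' i := by
          have := le_abs_self (f i - f' i); linarith
      _ ≤ _ := add_le_add (Finset.le_sup' (fun i => |f i - f' i|) hi)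
          (Finset.le_sup' f' hi)
  · rw [sub_le_iff_le_add]
    apply Finset.sup'_le
    intro i hi
    calc f' i ≤ |f i - f' i| + f i := by
          have := neg_abs_le (f i - f' i); linarith
      _ ≤ _ := add_le_add (Finset.le_sup' (fun i => |f i - f' i|) hi)
          (Finset.le_sup' f hi)

lemma margin_contraction {X : Type*} {C : ℕ} (hC2 : 2 ≤ C) (g c : Fin C → X → ℝ)
    (x : X) (y : Fin C) :
    ∃ k, |marginFun hC2 g (x, y) - marginFun hC2 c (x, y)| ≤ |g k x - c k x| := by
  have hA : ((Finset.univ : Finset (Fin C)).erase y).Nonempty := by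
    rw [← Finset.card_pos, Finset.card_erase_of_mem (Finset.mem_univ _),
      Finset.card_univ, Fintype.card_fin]
    omega
  obtain ⟨k₀, hk₀, hEq⟩ := Finset.exists_mem_eq_sup' hA (fun l => |g l x - c l x|)
  have hsup : |((Finset.univ : Finset (Fin C)).erase y).sup' hA (fun l => g l x) -
      ((Finset.univ : Finset (Fin C)).erase y).sup' hA (fun l => c l x)| ≤
      |g k₀ x - c k₀ x| := by
    have := abs_sup'_sub_sup'_le ((Finset.univ : Finset (Fin C)).erase y) hA
      (fun l => g l x) (fun l => c l x)
    rw [← hEq]; exact this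
  have hmg : marginFun hC2 g (x, y) = (1 / 2) * (g y x -
      ((Finset.univ : Finset (Fin C)).erase y).sup' hA (fun l => g l x)) := rfl
  have hmc : marginFun hC2 c (x, y) = (1 / 2) * (c y x -
      ((Finset.univ : Finset (Fin C)).erase y).sup' hA (fun l => c l x)) := rfl
  rw [hmg, hmc]
  set sg := ((Finset.univ : Finset (Fin C)).erase y).sup' hA (fun l => g l x)
  set sc := ((Finset.univ : Finset (Fin C)).erase y).sup' hA (fun l => c l x)
  have h1 := le_abs_self (g y x - c y x)
  have h2 := neg_abs_le (g y x - c y x)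
  have h3 := le_abs_self (sg - sc)
  have h4 := neg_abs_le (sg - sc)
  rcases le_total (|g y x - c y x|) (|g k₀ x - c k₀ x|) with hle | hle
  · exact ⟨k₀, abs_le.mpr ⟨by linarith, by linarith⟩⟩
  · exact ⟨y, abs_le.mpr ⟨by linarith, by linarith⟩⟩

lemma cover_le_prod {X : Type*} {C : ℕ} (hC2 : 2 ≤ C)
    (Gc : Fin C → Set (X → ℝ)) (ε ε' : ℝ)
    (d : (X × Fin C → ℝ) → (X × Fin C → ℝ) → ℝ)
    (d' : (X → ℝ) → (X → ℝ) → ℝ)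
    (hcontr : ∀ g c : Fin C → X → ℝ, (∀ k, d' (g k) (c k) < ε') →
      d (marginFun hC2 g) (marginFun hC2 c) < ε) :
    properCoveringNumber ε
      {f | ∃ g : Fin C → X → ℝ, (∀ k, g k ∈ Gc k) ∧ f = marginFun hC2 g} d ≤
      ∏ k, properCoveringNumber ε' (Gc k) d' := by
  classical
  set FG : Set (X × Fin C → ℝ) :=
    {f | ∃ g : Fin C → X → ℝ, (∀ k, g k ∈ Gc k) ∧ f = marginFun hC2 g} with hFG
  by_cases hne : ∀ k, (Gc k).Nonempty
  · by_cases htop : ∏ k, properCoveringNumber ε' (Gc k) d' = ⊤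
    · rw [htop]; exact le_top
    · have hone : ∀ k, 1 ≤ properCoveringNumber ε' (Gc k) d' := by
        intro k
        apply le_sInf
        rintro b ⟨N, -, hcov, hcard⟩
        obtain ⟨f, hf⟩ := hne k
        obtain ⟨cc, hcc, -⟩ := hcov f hf
        rw [← hcard]
        exact_mod_cast Nat.one_le_iff_ne_zero.mpr
          (Finset.card_ne_zero_of_mem hcc)
      have hfac : ∀ k, properCoveringNumber ε' (Gc k) d' ≠ ⊤ := by
        intro k
        exact ne_top_of_le_ne_top htop
          (Finset.single_le_prod' (fun j _ => hone j) (Finset.mem_univ k))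
      have hSne : ∀ k, {n : ℕ∞ | ∃ N : Finset (X → ℝ), ↑N ⊆ Gc k ∧
          (∀ f ∈ Gc k, ∃ c ∈ N, d' f c < ε') ∧ (N.card : ℕ∞) = n}.Nonempty := by
        intro k
        by_contra h
        rw [Set.not_nonempty_iff_eq_empty] at h
        exact hfac k (by rw [properCoveringNumber, h, sInf_empty])
      have hmem : ∀ k, ∃ N : Finset (X → ℝ), ↑N ⊆ Gc k ∧
          (∀ f ∈ Gc k, ∃ c ∈ N, d' f c < ε') ∧
          (N.card : ℕ∞) = properCoveringNumber ε' (Gc k) d' :=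
        fun k => csInf_mem (hSne k)
      choose Nk hsub hcov hcard using hmem
      set Nbig : Finset (X × Fin C → ℝ) :=
        (Fintype.piFinset Nk).image (fun g => marginFun hC2 g) with hNbig
      have hLHS : properCoveringNumber ε FG d ≤ (Nbig.card : ℕ∞) := by
        apply sInf_le
        refine ⟨Nbig, ?_, ?_, rfl⟩
        · intro f hf
          simp only [hNbig, Finset.coe_image, Set.mem_image, Finset.mem_coe,
            Fintype.mem_piFinset] at hf
          obtain ⟨g, hg, rfl⟩ := hf
          exact ⟨g, fun k => hsub k (hg k), rfl⟩
        · rintro f ⟨g, hgk, rfl⟩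
          have : ∀ k, ∃ c ∈ Nk k, d' (g k) c < ε' := fun k => hcov k (g k) (hgk k)
          choose cc hcc1 hcc2 using this
          refine ⟨marginFun hC2 cc, ?_, hcontr g cc hcc2⟩
          exact Finset.mem_image_of_mem _ (Fintype.mem_piFinset.mpr hcc1)
      refine hLHS.trans ?_
      calc (Nbig.card : ℕ∞) ≤ ((Fintype.piFinset Nk).card : ℕ∞) :=
            Nat.cast_le.mpr Finset.card_image_le
        _ = ((∏ k, (Nk k).card : ℕ) : ℕ∞) := by rw [Fintype.card_piFinset]
        _ = ∏ k, ((Nk k).card : ℕ∞) := Nat.cast_prod _ _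
        _ = ∏ k, properCoveringNumber ε' (Gc k) d' :=
            Finset.prod_congr rfl (fun k _ => hcard k)
  · push_neg at hne
    obtain ⟨k₀, hk₀⟩ := hne
    have h0 : properCoveringNumber ε FG d ≤ 0 := by
      apply sInf_le
      refine ⟨∅, by simp, ?_, by simp⟩
      rintro f ⟨g, hg, -⟩
      exact absurd (hg k₀) (by rw [hk₀]; exact Set.notMem_empty _)
    exact h0.trans zero_le

lemma rpow_inv_natpow (p : ℕ) (hp : 0 < p) {S : ℝ} (hS : 0 ≤ S) :
    (S ^ ((1 : ℝ) / (p : ℝ))) ^ p = S := by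
  have hp' : (p : ℝ) ≠ 0 := by exact_mod_cast hp.ne'
  rw [← Real.rpow_natCast (S ^ ((1 : ℝ) / (p : ℝ))) p, ← Real.rpow_mul hS,
    one_div, inv_mul_cancel₀ hp', Real.rpow_one]

theorem stmt15 {X : Type*} (C : ℕ) (hC : 3 ≤ C) (M : ℝ) (hM : 1 ≤ M)
    (Gc : Fin C → Set (X → ℝ)) (hGc : ∀ k, ∀ g ∈ Gc k, ∀ x, |g x| ≤ M)
    (m : ℕ) (hm : 0 < m) (z : Fin m → X × Fin C) (ε : ℝ) (hε : 0 < ε) :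
    ∀ FG : Set (X × Fin C → ℝ),
      FG = {f | ∃ g : Fin C → X → ℝ, (∀ k, g k ∈ Gc k) ∧
        f = marginFun (by omega) g} →
      (∀ p : ℕ, 0 < p →
        properCoveringNumber ε FG (empDist p m z) ≤
          ∏ k, properCoveringNumber (ε / (C : ℝ) ^ ((1 : ℝ) / (p : ℝ))) (Gc k)
            (empDist p m (fun i => (z i).1)))
      ∧ properCoveringNumber ε FG (empDistInf m z) ≤
          ∏ k, properCoveringNumber ε (Gc k) (empDistInf m (fun i => (z i).1)) := by
  intro FG hFG
  subst hFG
  have hC2 : 2 ≤ C := by omega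
  have hCne : (Finset.univ : Finset (Fin C)).Nonempty :=
    ⟨⟨0, by omega⟩, Finset.mem_univ _⟩
  constructor
  · -- L_p case
    intro p hp
    apply cover_le_prod hC2
    intro g c hgc
    have hp' : (0 : ℝ) < (p : ℝ) := by exact_mod_cast hp
    have hC0 : (0 : ℝ) < (C : ℝ) := by positivity
    have hCp : (0 : ℝ) < (C : ℝ) ^ ((1 : ℝ) / (p : ℝ)) := Real.rpow_pos_of_pos hC0 _
    set ε' := ε / (C : ℝ) ^ ((1 : ℝ) / (p : ℝ)) with hε'def
    have hε' : 0 < ε' := div_pos hε hCp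
    set x' : Fin m → X := fun i => (z i).1 with hx'
    -- each coordinate bound
    have hSk : ∀ k, (1 / (m : ℝ)) * ∑ i, |g k (x' i) - c k (x' i)| ^ p < ε' ^ p := by
      intro k
      have hS0 : (0 : ℝ) ≤ (1 / (m : ℝ)) * ∑ i, |g k (x' i) - c k (x' i)| ^ p := by
        positivity
      have hlt := hgc k
      simp only [empDist] at hlt
      have := pow_lt_pow_left₀ hlt (Real.rpow_nonneg hS0 _) hp.ne'
      rwa [rpow_inv_natpow p hp hS0] at this
    -- total bound
    have hT0 : (0 : ℝ) ≤ (1 / (m : ℝ)) * ∑ i,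
        |marginFun hC2 g (z i) - marginFun hC2 c (z i)| ^ p := by positivity
    have hT : (1 / (m : ℝ)) * ∑ i,
        |marginFun hC2 g (z i) - marginFun hC2 c (z i)| ^ p < ε ^ p := by
      have step1 : ∀ i, |marginFun hC2 g (z i) - marginFun hC2 c (z i)| ^ p ≤
          ∑ k, |g k (x' i) - c k (x' i)| ^ p := by
        intro i
        obtain ⟨k, hk⟩ := margin_contraction hC2 g c (z i).1 (z i).2
        rw [Prod.mk.eta] at hk
        calc |marginFun hC2 g (z i) - marginFun hC2 c (z i)| ^ p
            ≤ |g k (x' i) - c k (x' i)| ^ p := pow_le_pow_left₀ (abs_nonneg _) hk p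
          _ ≤ ∑ k', |g k' (x' i) - c k' (x' i)| ^ p :=
              Finset.single_le_sum (f := fun k' => |g k' (x' i) - c k' (x' i)| ^ p)
                (fun k' _ => pow_nonneg (abs_nonneg _) p) (Finset.mem_univ k)
      calc (1 / (m : ℝ)) * ∑ i, |marginFun hC2 g (z i) - marginFun hC2 c (z i)| ^ p
          ≤ (1 / (m : ℝ)) * ∑ i, ∑ k, |g k (x' i) - c k (x' i)| ^ p := by
            apply mul_le_mul_of_nonneg_left (Finset.sum_le_sum fun i _ => step1 i)
            positivity
        _ = ∑ k, (1 / (m : ℝ)) * ∑ i, |g k (x' i) - c k (x' i)| ^ p := by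
            rw [Finset.sum_comm, Finset.mul_sum]
        _ < ∑ _k : Fin C, ε' ^ p :=
            Finset.sum_lt_sum_of_nonempty hCne (fun k _ => hSk k)
        _ = (C : ℝ) * (ε ^ p / (C : ℝ)) := by
            rw [Finset.sum_const, Finset.card_univ, Fintype.card_fin, nsmul_eq_mul,
              hε'def, div_pow, rpow_inv_natpow p hp hC0.le]
        _ = ε ^ p := by field_simp
    -- conclude
    simp only [empDist]
    calc ((1 / (m : ℝ)) * ∑ i,
          |marginFun hC2 g (z i) - marginFun hC2 c (z i)| ^ p) ^ ((1 : ℝ) / (p : ℝ))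
        < (ε ^ p) ^ ((1 : ℝ) / (p : ℝ)) := by
          apply Real.rpow_lt_rpow hT0 hT (by positivity)
      _ = ε := by
          rw [← Real.rpow_natCast ε p, ← Real.rpow_mul hε.le, mul_one_div,
            div_self (by exact_mod_cast hp.ne' : (p : ℝ) ≠ 0), Real.rpow_one]
  · -- L_∞ case
    apply cover_le_prod hC2
    intro g c hgc
    have hmne : Nonempty (Fin m) := ⟨⟨0, hm⟩⟩
    set δ := Finset.univ.sup' hCne
      (fun k => empDistInf m (fun i => (z i).1) (g k) (c k)) with hδdef
    have hδ : δ < ε := (Finset.sup'_lt_iff hCne).mpr (fun k _ => hgc k)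
    have hle : empDistInf m z (marginFun hC2 g) (marginFun hC2 c) ≤ δ := by
      simp only [empDistInf]
      apply ciSup_le
      intro i
      obtain ⟨k, hk⟩ := margin_contraction hC2 g c (z i).1 (z i).2
      rw [Prod.mk.eta] at hk
      calc |marginFun hC2 g (z i) - marginFun hC2 c (z i)|
          ≤ |g k (z i).1 - c k (z i).1| := hk
        _ ≤ empDistInf m (fun i => (z i).1) (g k) (c k) :=
            le_ciSup (f := fun j => |g k (z j).1 - c k (z j).1|)
              (Set.Finite.bddAbove (Set.finite_range _)) i
        _ ≤ δ := Finset.le_sup'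
            (f := fun k => empDistInf m (fun i => (z i).1) (g k) (c k))
            (Finset.mem_univ k)
    linarith
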